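/- Let F(κ) = (∑ᵢ κᵢᵏ)^α on Γ₊ ⊂ ℝⁿ with k ≥ 1 and α ≥ 1/k. Then for all κ ∈ Γ₊ and all (y₁,…,yₙ) ∈ ℝⁿ: ∑ᵢ κᵢ⁻¹ (∂log F/∂κᵢ) yᵢ² + ∑_{i,j} (∂²log F/∂κᵢ∂κⱼ) yᵢ yⱼ ≥ 0. -/

import Mathlib

open Finset

noncomputable def pd {n : ℕ} (F : (Fin n → ℝ) → ℝ) (κ : Fin n → ℝ) (i : Fin n) : ℝ :=
  fderiv ℝ F κ (Pi.single i 1)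

noncomputable def pd2 {n : ℕ} (F : (Fin n → ℝ) → ℝ) (κ : Fin n → ℝ) (i j : Fin n) : ℝ :=
  fderiv ℝ (fun x => pd F x j) κ (Pi.single i 1)

section lemmas

variable {n k : ℕ}

/-- derivative of the power sum -/
lemma hasFDerivAt_Ssum (x : Fin n → ℝ) :
    HasFDerivAt (fun z : Fin n → ℝ => ∑ i, z i ^ k)
      (∑ i, ((k : ℝ) * x i ^ (k - 1)) • (ContinuousLinearMap.proj i : (Fin n → ℝ) →L[ℝ] ℝ)) x := by
  refine HasFDerivAt.fun_sum fun i _ => ?_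
  exact
    (hasDerivAt_pow k (x i)).comp_hasFDerivAt x (hasFDerivAt_apply i x)

lemma sum_proj_single (c : Fin n → ℝ) (j : Fin n) :
    (∑ i, (c i) • (ContinuousLinearMap.proj i : (Fin n → ℝ) →L[ℝ] ℝ)) (Pi.single j 1) = c j := by
  rw [ContinuousLinearMap.sum_apply]
  simp only [ContinuousLinearMap.smul_apply, ContinuousLinearMap.proj_apply, Pi.single_apply,
    smul_eq_mul, mul_ite, mul_one, mul_zero]
  simp

end lemmas

/-- Condition 1.1 iv) for `F = Sₖ^α = (∑ κᵢᵏ)^α` with `k ≥ 1`, `α ≥ 1/k`: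
`∑ᵢ κᵢ⁻¹ (∂log F/∂κᵢ) yᵢ² + ∑_{i,j} (∂²log F/∂κᵢ∂κⱼ) yᵢyⱼ ≥ 0` on the positive cone. -/
theorem stmt9 {n : ℕ} (k : ℕ) (hk : 1 ≤ k) (α : ℝ) (hα : 1 / (k : ℝ) ≤ α)
    (F : (Fin n → ℝ) → ℝ) (hF : F = fun κ => (∑ i, κ i ^ k) ^ α) :
    ∀ κ : Fin n → ℝ, (∀ i, 0 < κ i) → ∀ y : Fin n → ℝ,
      0 ≤ ∑ i, (κ i)⁻¹ * pd (fun x => Real.log (F x)) κ i * (y i) ^ 2 +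
          ∑ i, ∑ j, pd2 (fun x => Real.log (F x)) κ i j * y i * y j := by
  intro κ hκ y
  rcases Nat.eq_zero_or_pos n with hn | hn
  · subst hn; simp
  have hkpos : (0 : ℝ) < k := by exact_mod_cast hk
  have hαpos : 0 < α := lt_of_lt_of_le (by positivity) hα
  haveI : Nonempty (Fin n) := ⟨⟨0, hn⟩⟩
  set S : (Fin n → ℝ) → ℝ := fun z => ∑ i, z i ^ k with hSdef
  have hScont : Continuous S := by
    apply continuous_finset_sum; intro i _; exact (continuous_apply i).pow k
  set U : Set (Fin n → ℝ) := {z | 0 < S z} with hUdef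
  have hUopen : IsOpen U := isOpen_lt continuous_const hScont
  have hposU : ∀ z ∈ U, 0 < S z := fun z hz => hz
  have hκU : κ ∈ U := by
    refine Finset.sum_pos (fun i _ => pow_pos (hκ i) k) ⟨⟨0, hn⟩, Finset.mem_univ _⟩
  -- log F agrees with α * log S on U
  have hEqFun : ∀ z ∈ U, Real.log (F z) = α * Real.log (S z) := by
    intro z hz
    rw [hF]
    exact Real.log_rpow (hposU z hz) α
  -- derivative of α * log S on U
  have hL : ∀ z ∈ U, HasFDerivAt (fun w => α * Real.log (S w))
      (α • ((S z)⁻¹ • (∑ i, ((k : ℝ) * z i ^ (k - 1)) •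
        (ContinuousLinearMap.proj i : (Fin n → ℝ) →L[ℝ] ℝ)))) z := by
    intro z hz
    exact ((hasFDerivAt_Ssum z).log (ne_of_gt (hposU z hz))).const_mul α
  -- first derivative formula
  have hpd : ∀ z ∈ U, ∀ j, pd (fun x => Real.log (F x)) z j
      = α * (S z)⁻¹ * ((k : ℝ) * z j ^ (k - 1)) := by
    intro z hz j
    have hev : (fun x => Real.log (F x)) =ᶠ[nhds z] (fun w => α * Real.log (S w)) :=
      Filter.eventuallyEq_of_mem (hUopen.mem_nhds hz) (fun w hw => hEqFun w hw)
    unfold pd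
    rw [hev.fderiv_eq, (hL z hz).fderiv]
    simp only [ContinuousLinearMap.smul_apply, smul_eq_mul]
    rw [sum_proj_single]
    ring
  -- second derivative: the function x ↦ pd (log F) x j eventually equals P j
  have hpd2 : ∀ i j, pd2 (fun x => Real.log (F x)) κ i j
      = α * (k : ℝ) * ((S κ)⁻¹ * (((k - 1 : ℕ) : ℝ) * κ j ^ (k - 1 - 1)
            * (if j = i then (1:ℝ) else 0))
          + κ j ^ (k - 1) * (-((S κ) ^ 2)⁻¹ * ((k : ℝ) * κ i ^ (k - 1)))) := by
    intro i j
    have hev : (fun x => pd (fun x => Real.log (F x)) x j) =ᶠ[nhds κ]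
        (fun z => (α * (k : ℝ)) * ((S z)⁻¹ * z j ^ (k - 1))) :=
      Filter.eventuallyEq_of_mem (hUopen.mem_nhds hκU)
        (fun z hz => by rw [hpd z hz j]; ring)
    have hinv : HasFDerivAt (fun z : Fin n → ℝ => (S z)⁻¹)
        (-(((S κ) ^ 2)⁻¹ • (∑ i, ((k : ℝ) * κ i ^ (k - 1)) •
          (ContinuousLinearMap.proj i : (Fin n → ℝ) →L[ℝ] ℝ)))) κ := by
      simpa [Function.comp_def, neg_smul] using
        (hasDerivAt_inv (ne_of_gt (hposU κ hκU))).comp_hasFDerivAt κ (hasFDerivAt_Ssum κ)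
    have hpow : HasFDerivAt (fun z : Fin n → ℝ => z j ^ (k - 1))
        ((((k - 1 : ℕ) : ℝ) * κ j ^ (k - 1 - 1)) •
          (ContinuousLinearMap.proj j : (Fin n → ℝ) →L[ℝ] ℝ)) κ := by
      exact
        (hasDerivAt_pow (k - 1) (κ j)).comp_hasFDerivAt κ (hasFDerivAt_apply j κ)
    have hP : HasFDerivAt (fun z : Fin n → ℝ => (α * (k : ℝ)) * ((S z)⁻¹ * z j ^ (k - 1)))
        ((α * (k : ℝ)) • ((S κ)⁻¹ • ((((k - 1 : ℕ) : ℝ) * κ j ^ (k - 1 - 1)) •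
            (ContinuousLinearMap.proj j : (Fin n → ℝ) →L[ℝ] ℝ))
          + (κ j ^ (k - 1)) • (-(((S κ) ^ 2)⁻¹ • (∑ i, ((k : ℝ) * κ i ^ (k - 1)) •
            (ContinuousLinearMap.proj i : (Fin n → ℝ) →L[ℝ] ℝ)))))) κ :=
      (hinv.mul hpow).const_mul (α * (k : ℝ))
    unfold pd2
    rw [hev.fderiv_eq, hP.fderiv]
    simp only [ContinuousLinearMap.add_apply, ContinuousLinearMap.smul_apply,
      ContinuousLinearMap.neg_apply, ContinuousLinearMap.proj_apply, smul_eq_mul]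
    rw [sum_proj_single]
    simp only [Pi.single_apply]
    by_cases h : j = i
    · subst h; simp
    · have h' : ¬ i = j := fun hh => h hh.symm
      simp [h, h']
  -- abbreviations
  set Sκ := S κ with hSκ
  have hSpos : 0 < Sκ := hposU κ hκU
  set b : Fin n → ℝ := fun i => κ i ^ (k - 1) with hb
  set c : Fin n → ℝ := fun i => κ i ^ (k - 1) * (κ i)⁻¹ with hc
  have hcoef : ∀ j, (((k - 1 : ℕ) : ℝ)) * κ j ^ (k - 1 - 1) = (((k - 1 : ℕ) : ℝ)) * c j := by
    intro j
    rcases Nat.lt_or_ge k 2 with h2 | h2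
    · interval_cases k
      · simp
    · have hk2 : k - 1 - 1 + 1 = k - 1 := by omega
      have : κ j ^ (k - 1) = κ j ^ (k - 1 - 1) * κ j := by
        rw [← pow_succ, hk2]
      rw [hc]
      simp only
      rw [this, mul_assoc (κ j ^ (k - 1 - 1)), mul_inv_cancel₀ (ne_of_gt (hκ j)), mul_one]
  set T : ℝ := ∑ i, c i * y i ^ 2 with hT
  set B : ℝ := ∑ i, b i * y i with hB
  -- first sum
  have hsum1 : ∑ i, (κ i)⁻¹ * pd (fun x => Real.log (F x)) κ i * (y i) ^ 2
      = α * (k : ℝ) * Sκ⁻¹ * T := by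
    rw [hT, Finset.mul_sum]
    refine Finset.sum_congr rfl fun i _ => ?_
    rw [hpd κ hκU i, hc]
    simp only
    ring
  -- double sum
  have hsum2 : ∑ i, ∑ j, pd2 (fun x => Real.log (F x)) κ i j * y i * y j
      = α * (k : ℝ) * (((k - 1 : ℕ) : ℝ)) * Sκ⁻¹ * T - α * (k : ℝ)^2 * ((Sκ)^2)⁻¹ * B^2 := by
    have hinner : ∀ i, ∑ j, pd2 (fun x => Real.log (F x)) κ i j * y i * y j
        = α * (k : ℝ) * (((k - 1 : ℕ) : ℝ)) * Sκ⁻¹ * (c i * y i ^ 2)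
          - α * (k : ℝ)^2 * ((Sκ)^2)⁻¹ * ((b i * y i) * B) := by
      intro i
      have : ∀ j, pd2 (fun x => Real.log (F x)) κ i j * y i * y j
          = (if j = i then α * (k : ℝ) * (((k - 1 : ℕ) : ℝ)) * Sκ⁻¹ * (c j * (y i * y j)) else 0)
            - α * (k : ℝ)^2 * ((Sκ)^2)⁻¹ * ((b i * y i) * (b j * y j)) := by
        intro j
        rw [hpd2 i j, hcoef j]
        rcases eq_or_ne j i with h | h <;> simp [h, hb] <;> ring
      rw [Finset.sum_congr rfl fun j _ => this j, Finset.sum_sub_distrib,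
        Finset.sum_ite_eq' univ i]
      simp only [Finset.mem_univ, if_true]
      have hc2 : ∑ j, α * (k:ℝ)^2 * ((Sκ)^2)⁻¹ * ((b i * y i) * (b j * y j))
          = α * (k:ℝ)^2 * ((Sκ)^2)⁻¹ * ((b i * y i) * B) := by
        rw [hB, Finset.mul_sum, Finset.mul_sum]
      rw [hc2]
      ring
    rw [Finset.sum_congr rfl fun i _ => hinner i, Finset.sum_sub_distrib]
    have e1 : ∑ i, α * (k : ℝ) * (((k - 1 : ℕ) : ℝ)) * Sκ⁻¹ * (c i * y i ^ 2)
        = α * (k : ℝ) * (((k - 1 : ℕ) : ℝ)) * Sκ⁻¹ * T := by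
      rw [hT, Finset.mul_sum]
    have e2 : ∑ i, α * (k:ℝ)^2 * ((Sκ)^2)⁻¹ * ((b i * y i) * B)
        = α * (k:ℝ)^2 * ((Sκ)^2)⁻¹ * (B * B) := by
      calc ∑ i, α * (k:ℝ)^2 * ((Sκ)^2)⁻¹ * ((b i * y i) * B)
          = ∑ i, (b i * y i) * (α * (k:ℝ)^2 * ((Sκ)^2)⁻¹ * B) :=
            Finset.sum_congr rfl fun i _ => by ring
        _ = B * (α * (k:ℝ)^2 * ((Sκ)^2)⁻¹ * B) := by rw [← Finset.sum_mul, ← hB]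
        _ = α * (k:ℝ)^2 * ((Sκ)^2)⁻¹ * (B * B) := by ring
    rw [e1, e2]
    ring
  rw [hsum1, hsum2]
  -- Cauchy–Schwarz
  have hTnn : 0 ≤ T := by
    refine Finset.sum_nonneg fun i _ => ?_
    have := hκ i
    positivity
  have hCS : B ^ 2 ≤ Sκ * T := by
    have key := Finset.sum_mul_sq_le_sq_mul_sq univ
      (fun i => Real.sqrt (κ i ^ k)) (fun i => Real.sqrt (c i) * y i)
    have h1 : ∀ i : Fin n, Real.sqrt (κ i ^ k) * (Real.sqrt (c i) * y i) = b i * y i := by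
      intro i
      have hci : 0 ≤ c i := by
        have := hκ i; positivity
      have hki : (0:ℝ) ≤ κ i ^ k := le_of_lt (pow_pos (hκ i) k)
      rw [← mul_assoc, ← Real.sqrt_mul hki]
      have : κ i ^ k * c i = (κ i ^ (k - 1)) ^ 2 := by
        have hkk : k = (k - 1) + 1 := by omega
        have hsplit : κ i ^ k = κ i ^ (k - 1) * κ i := by
          conv_lhs => rw [hkk]
          rw [pow_succ]
        rw [hc]; simp only
        rw [hsplit]
        have : κ i ^ (k - 1) * κ i * (κ i ^ (k - 1) * (κ i)⁻¹)
            = (κ i ^ (k - 1)) ^ 2 * (κ i * (κ i)⁻¹) := by ring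
        rw [this, mul_inv_cancel₀ (ne_of_gt (hκ i)), mul_one]
      rw [this, Real.sqrt_sq (le_of_lt (pow_pos (hκ i) (k-1))), hb]
    have h2 : ∀ i : Fin n, Real.sqrt (κ i ^ k) ^ 2 = κ i ^ k := fun i =>
      Real.sq_sqrt (le_of_lt (pow_pos (hκ i) k))
    have h3 : ∀ i : Fin n, (Real.sqrt (c i) * y i) ^ 2 = c i * y i ^ 2 := by
      intro i
      have hci : 0 ≤ c i := by have := hκ i; positivity
      rw [mul_pow, Real.sq_sqrt hci]
    calc B ^ 2 = (∑ i, Real.sqrt (κ i ^ k) * (Real.sqrt (c i) * y i)) ^ 2 := by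
          rw [hB]; congr 1; exact Finset.sum_congr rfl fun i _ => (h1 i).symm
      _ ≤ (∑ i, Real.sqrt (κ i ^ k) ^ 2) * ∑ i, (Real.sqrt (c i) * y i) ^ 2 := key
      _ = Sκ * T := by
          rw [hSκ, hSdef, hT]
          congr 1
          · exact Finset.sum_congr rfl fun i _ => h2 i
          · exact Finset.sum_congr rfl fun i _ => h3 i
  -- final algebra
  have hcast : (((k - 1 : ℕ) : ℝ)) = (k : ℝ) - 1 := by
    push_cast [hk]; ring
  rw [hcast]
  have heq : α * (k:ℝ) * Sκ⁻¹ * T + (α * (k:ℝ) * ((k:ℝ) - 1) * Sκ⁻¹ * T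
      - α * (k:ℝ)^2 * (Sκ^2)⁻¹ * B^2)
      = α * (k:ℝ)^2 * (Sκ^2)⁻¹ * (Sκ * T - B^2) := by
    have hS0 : Sκ ≠ 0 := ne_of_gt hSpos
    field_simp
    ring
  rw [heq]
  have : 0 ≤ Sκ * T - B ^ 2 := sub_nonneg.mpr hCS
  positivity
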